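/- arXiv:1207.5127 — 10 statements merged into one kernel-verified Lean document; each statement's English description precedes it below -/
import Mathlib

section
/- Let n, α, λ, β, c be real numbers with n ≠ 1, let I ⊆ ℝ be an open interval, and let V : ℝ → ℝ be twice differentiable on I with V(z) > 0 for all z ∈ I. Suppose V satisfies (α - c)·(n-1)²·V³ - λ·(n-1)²·V² - β·c·n·(n-1)·V·V'' + β·c·n·(2n-1)·(V')² = 0 on I. Then the function U := V^(-1/(n-1)) (real power) satisfies (α - c)·U - λ·V^(-n/(n-1)) + β·c·(V^(-n/(n-1)))'' = 0 on I, i.e. U satisfies the integrated travelling-wave RLW equation (α - c)·U - λ·Uⁿ + β·c·(Uⁿ)'' = 0 with Uⁿ interpreted as V^(-n/(n-1)). -/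
/-- If `V > 0` is twice differentiable on an open interval and satisfies the
transformed equation
`(α-c)(n-1)²V³ - λ(n-1)²V² - βcn(n-1)V·V'' + βcn(2n-1)(V')² = 0`,
then `U = V^(-1/(n-1))` satisfies the integrated travelling-wave RLW equation
`(α-c)·U - λ·Uⁿ + β·c·(Uⁿ)'' = 0`, with `Uⁿ` interpreted as `V^(-n/(n-1))`. -/
theorem variant_RLW_power_transformation
    (n α lam β c a b : ℝ) (hn : n ≠ 1) (V : ℝ → ℝ)
    (hV₁ : ∀ z ∈ Set.Ioo a b, DifferentiableAt ℝ V z)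
    (hV₂ : ∀ z ∈ Set.Ioo a b, DifferentiableAt ℝ (deriv V) z)
    (hVpos : ∀ z ∈ Set.Ioo a b, 0 < V z)
    (hODE : ∀ z ∈ Set.Ioo a b,
      (α - c) * (n - 1) ^ 2 * V z ^ 3 - lam * (n - 1) ^ 2 * V z ^ 2
        - β * c * n * (n - 1) * V z * deriv (deriv V) z
        + β * c * n * (2 * n - 1) * (deriv V z) ^ 2 = 0) :
    ∀ z ∈ Set.Ioo a b,
      (α - c) * V z ^ (-1 / (n - 1)) - lam * V z ^ (-(n / (n - 1)))
        + β * c * deriv (deriv (fun y => V y ^ (-(n / (n - 1))))) z = 0 := by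
  intro z hz
  have hn' : n - 1 ≠ 0 := sub_ne_zero.mpr hn
  set p : ℝ := -(n / (n - 1)) with hp
  have hpos := hVpos z hz
  -- first derivative on the interval
  have hd1 : ∀ y ∈ Set.Ioo a b,
      HasDerivAt (fun y => V y ^ p) (deriv V y * p * V y ^ (p - 1)) y := by
    intro y hy
    exact ((hV₁ y hy).hasDerivAt).rpow_const (Or.inl (hVpos y hy).ne')
  have heq : deriv (fun y => V y ^ p) =ᶠ[nhds z]
      fun y => deriv V y * p * V y ^ (p - 1) := by
    filter_upwards [isOpen_Ioo.mem_nhds hz] with y hy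
    exact (hd1 y hy).deriv
  -- second derivative at z
  have h1 : HasDerivAt (deriv V) (deriv (deriv V) z) z := (hV₂ z hz).hasDerivAt
  have h2 : HasDerivAt (fun y => V y ^ (p - 1))
      (deriv V z * (p - 1) * V z ^ (p - 1 - 1)) z :=
    ((hV₁ z hz).hasDerivAt).rpow_const (Or.inl hpos.ne')
  have h3 : HasDerivAt (fun y => deriv V y * p * V y ^ (p - 1))
      ((deriv (deriv V) z * p) * V z ^ (p - 1) +
        (deriv V z * p) * (deriv V z * (p - 1) * V z ^ (p - 1 - 1))) z :=
    (h1.mul_const p).mul h2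
  have hdd : deriv (deriv (fun y => V y ^ p)) z =
      (deriv (deriv V) z * p) * V z ^ (p - 1) +
        (deriv V z * p) * (deriv V z * (p - 1) * V z ^ (p - 1 - 1)) := by
    rw [heq.deriv_eq]
    exact h3.deriv
  -- power rewrites: everything in terms of A = V z ^ (p - 1 - 1)
  have key : ∀ (s t : ℝ) (k : ℕ), s = t + k → V z ^ s = V z ^ t * V z ^ k := by
    intro s t k h
    rw [h, Real.rpow_add hpos, Real.rpow_natCast]
  have hA1 : V z ^ (p - 1) = V z ^ (p - 1 - 1) * V z ^ (1 : ℕ) :=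
    key _ _ 1 (by push_cast; ring)
  have hA2 : V z ^ p = V z ^ (p - 1 - 1) * V z ^ (2 : ℕ) :=
    key _ _ 2 (by push_cast; ring)
  have hA3 : V z ^ (-1 / (n - 1)) = V z ^ (p - 1 - 1) * V z ^ (3 : ℕ) :=
    key _ _ 3 (by rw [hp]; push_cast; field_simp; ring)
  -- the algebraic identity from the ODE
  have hM : (α - c) * V z ^ 3 - lam * V z ^ 2
      + β * c * ((deriv (deriv V) z * p) * V z +
        (deriv V z * p) * (deriv V z * (p - 1))) = 0 := by
    have h := hODE z hz
    rw [hp]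
    field_simp
    linear_combination h
  calc (α - c) * V z ^ (-1 / (n - 1)) - lam * V z ^ (-(n / (n - 1)))
        + β * c * deriv (deriv (fun y => V y ^ (-(n / (n - 1))))) z
      = V z ^ (p - 1 - 1) *
        ((α - c) * V z ^ 3 - lam * V z ^ 2
          + β * c * ((deriv (deriv V) z * p) * V z +
            (deriv V z * p) * (deriv V z * (p - 1)))) := by
        rw [← hp, hdd, hA1, hA2, hA3]; ring
    _ = 0 := by rw [hM, mul_zero]
end

section
/- Let n, α, λ, β, c be real numbers with n ≠ 1, let I ⊆ ℝ be an open interval, and let V : ℝ → ℝ be twice differentiable on I with V(z) > 0 for all z ∈ I. Suppose V satisfies -λ·(n-1)²·V² + β·(n-1)²·V³ + (α - c²)·(n-1)·V·V'' + (α - c²)·(2-n)·(V')² = 0 on I. Then the function U := V^(1/(n-1)) (real power) satisfies (α - c²)·U'' - λ·U + β·V^(n/(n-1)) = 0 on I, i.e. U satisfies the travelling-wave PHI-four equation (α - c²)·U'' - λ·U + β·Uⁿ = 0 with Uⁿ interpreted as V^(n/(n-1)). -/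
/-- If `V > 0` is twice differentiable on an open interval and satisfies the
transformed equation
`-λ(n-1)²V² + β(n-1)²V³ + (α-c²)(n-1)V·V'' + (α-c²)(2-n)(V')² = 0`,
then `U = V^(1/(n-1))` satisfies the travelling-wave PHI-four equation
`(α-c²)·U'' - λ·U + β·Uⁿ = 0`, with `Uⁿ` interpreted as `V^(n/(n-1))`. -/
theorem variant_PHI_four_power_transformation
    (n α lam β c a b : ℝ) (hn : n ≠ 1) (V : ℝ → ℝ)
    (hV₁ : ∀ z ∈ Set.Ioo a b, DifferentiableAt ℝ V z)
    (hV₂ : ∀ z ∈ Set.Ioo a b, DifferentiableAt ℝ (deriv V) z)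
    (hVpos : ∀ z ∈ Set.Ioo a b, 0 < V z)
    (hODE : ∀ z ∈ Set.Ioo a b,
      -lam * (n - 1) ^ 2 * V z ^ 2 + β * (n - 1) ^ 2 * V z ^ 3
        + (α - c ^ 2) * (n - 1) * V z * deriv (deriv V) z
        + (α - c ^ 2) * (2 - n) * (deriv V z) ^ 2 = 0) :
    ∀ z ∈ Set.Ioo a b,
      (α - c ^ 2) * deriv (deriv (fun y => V y ^ (1 / (n - 1)))) z
        - lam * V z ^ (1 / (n - 1)) + β * V z ^ (n / (n - 1)) = 0 := by
  intro z hz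
  have hne : n - 1 ≠ 0 := sub_ne_zero.mpr hn
  set k : ℝ := 1 / (n - 1) with hk
  have hpos := hVpos z hz
  -- first derivative on the interval
  have hder : ∀ w ∈ Set.Ioo a b,
      deriv (fun y => V y ^ k) w = deriv V w * k * V w ^ (k - 1) := by
    intro w hw
    exact (((hV₁ w hw).hasDerivAt).rpow_const (Or.inl (hVpos w hw).ne')).deriv
  have heq : deriv (fun y => V y ^ k) =ᶠ[nhds z]
      fun w => deriv V w * k * V w ^ (k - 1) :=
    Filter.eventuallyEq_of_mem (isOpen_Ioo.mem_nhds hz) hder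
  have hd2 : deriv (deriv (fun y => V y ^ k)) z
      = deriv (deriv V) z * k * V z ^ (k - 1)
        + deriv V z * k * (deriv V z * (k - 1) * V z ^ (k - 1 - 1)) := by
    rw [heq.deriv_eq]
    have h1 : HasDerivAt (fun w => deriv V w * k) (deriv (deriv V) z * k) z :=
      ((hV₂ z hz).hasDerivAt).mul_const k
    have h2 : HasDerivAt (fun w => V w ^ (k - 1))
        (deriv V z * (k - 1) * V z ^ (k - 1 - 1)) z :=
      ((hV₁ z hz).hasDerivAt).rpow_const (Or.inl hpos.ne')
    have : deriv (fun w => deriv V w * k * V w ^ (k - 1)) z = _ := (h1.mul h2).deriv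
    simpa [mul_comm, mul_left_comm, mul_assoc] using this
  rw [hd2]
  -- rpow rewrites
  set P : ℝ := V z ^ (k - 1 - 1) with hP
  have e1 : V z ^ (k - 1) = P * V z := by
    have h := Real.rpow_add hpos (k - 1 - 1) 1
    rw [Real.rpow_one] at h
    rw [show k - 1 = k - 1 - 1 + 1 by ring]
    exact h
  have e2 : V z ^ k = P * V z ^ 2 := by
    have h := Real.rpow_add hpos (k - 1) 1
    rw [Real.rpow_one] at h
    rw [show k = k - 1 + 1 by ring, h, e1]
    ring
  have e3 : V z ^ (n / (n - 1)) = P * V z ^ 3 := by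
    have h := Real.rpow_add hpos k 1
    rw [Real.rpow_one] at h
    rw [show n / (n - 1) = k + 1 by rw [hk]; field_simp; ring, h, e2]
    ring
  rw [e1, e2, e3, hk]
  have h := hODE z hz
  field_simp
  linear_combination P * h
end

section
/- (PHI-four, Case I.) Let n, λ, β, α, c ∈ ℂ with β ≠ 0 and c² ≠ α. Set b = λ(n-1)²/(4(c²-α)), a₀ = λ(n+1)/(2β), and b₂ = (n+1)(n-1)²λ²/(8β(c²-α)). Let S ⊆ ℂ be open and let φ : ℂ → ℂ be differentiable on S with φ'(z) = b + φ(z)² and φ(z) ≠ 0 for all z ∈ S. Then V := a₀ + b₂·φ⁻² satisfies -λ·(n-1)²·V² + β·(n-1)²·V³ + (α - c²)·(n-1)·V·V'' + (α - c²)·(2-n)·(V')² = 0 on S. -/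
/-- PHI-four, Case I: with `b = λ(n-1)²/(4(c²-α))`, `a₀ = λ(n+1)/(2β)`,
`b₂ = (n+1)(n-1)²λ²/(8β(c²-α))`, and `φ` a solution of the Riccati equation
`φ' = b + φ²` which is nonvanishing on an open set `S`, the function
`V = a₀ + b₂·φ⁻²` satisfies equation (m3nd4) on `S`. -/
theorem PHI_four_case_I
    (n lam β α c : ℂ) (hβ : β ≠ 0) (hc : c ^ 2 ≠ α)
    (S : Set ℂ) (hS : IsOpen S) (φ : ℂ → ℂ)
    (hφdiff : ∀ z ∈ S, DifferentiableAt ℂ φ z)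
    (hφ : ∀ z ∈ S, deriv φ z = lam * (n - 1) ^ 2 / (4 * (c ^ 2 - α)) + φ z ^ 2)
    (hφne : ∀ z ∈ S, φ z ≠ 0)
    (V : ℂ → ℂ)
    (hV : ∀ z, V z = lam * (n + 1) / (2 * β)
        + (n + 1) * (n - 1) ^ 2 * lam ^ 2 / (8 * β * (c ^ 2 - α)) * (φ z ^ 2)⁻¹) :
    ∀ z ∈ S,
      -lam * (n - 1) ^ 2 * V z ^ 2 + β * (n - 1) ^ 2 * V z ^ 3
        + (α - c ^ 2) * (n - 1) * V z * deriv (deriv V) z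
        + (α - c ^ 2) * (2 - n) * (deriv V z) ^ 2 = 0 := by
  have hcα : c ^ 2 - α ≠ 0 := sub_ne_zero.mpr hc
  set b : ℂ := lam * (n - 1) ^ 2 / (4 * (c ^ 2 - α)) with hb
  set a₀ : ℂ := lam * (n + 1) / (2 * β) with ha₀
  set b₂ : ℂ := (n + 1) * (n - 1) ^ 2 * lam ^ 2 / (8 * β * (c ^ 2 - α)) with hb₂
  set G : ℂ → ℂ := fun z => -2 * b₂ * (b * ((φ z)⁻¹) ^ 3 + (φ z)⁻¹) with hG
  -- first derivative
  have hderivV : ∀ z ∈ S, deriv V z = G z := by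
    intro z hz
    have hd : HasDerivAt φ (b + φ z ^ 2) z := by
      have := (hφdiff z hz).hasDerivAt
      rwa [hφ z hz] at this
    have hne := hφne z hz
    have hinv : HasDerivAt (fun w => ((φ w) ^ 2)⁻¹)
        (-(2 * φ z ^ 1 * (b + φ z ^ 2)) / (φ z ^ 2) ^ 2) z :=
      (hd.pow 2).inv (pow_ne_zero 2 hne)
    have hVfun : V = fun w => a₀ + b₂ * ((φ w) ^ 2)⁻¹ := funext fun w => hV w
    have hVd : HasDerivAt V (b₂ * (-(2 * φ z ^ 1 * (b + φ z ^ 2)) / (φ z ^ 2) ^ 2)) z := by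
      rw [hVfun]
      exact (hinv.const_mul b₂).const_add a₀
    rw [hVd.deriv, hG]
    field_simp
  intro z hz
  have hd : HasDerivAt φ (b + φ z ^ 2) z := by
    have := (hφdiff z hz).hasDerivAt
    rwa [hφ z hz] at this
  have hne := hφne z hz
  -- second derivative
  have hinv : HasDerivAt (fun w => (φ w)⁻¹) (-(b + φ z ^ 2) / φ z ^ 2) z := hd.inv hne
  have hG' : HasDerivAt G
      (-2 * b₂ * (b * ((3 : ℕ) * ((φ z)⁻¹) ^ 2 * (-(b + φ z ^ 2) / φ z ^ 2))
        + -(b + φ z ^ 2) / φ z ^ 2)) z := by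
    exact (((hinv.pow 3).const_mul b).add hinv).const_mul (-2 * b₂)
  have hVG : deriv V =ᶠ[nhds z] G :=
    Filter.eventuallyEq_of_mem (hS.mem_nhds hz) hderivV
  have hdd : deriv (deriv V) z = -2 * b₂ * (b * ((3 : ℕ) * ((φ z)⁻¹) ^ 2
      * (-(b + φ z ^ 2) / φ z ^ 2)) + -(b + φ z ^ 2) / φ z ^ 2) := by
    rw [hVG.deriv_eq, hG'.deriv]
  rw [hdd, hderivV z hz, hV z, hG]
  have h1 : lam * (n - 1) ^ 2 = 4 * (c ^ 2 - α) * b := by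
    rw [hb]; field_simp
  have h2 : lam * (n + 1) = 2 * β * a₀ := by
    rw [ha₀]; field_simp
  have h3 : b₂ = a₀ * b := by
    rw [hb₂, ha₀, hb]; field_simp; ring
  have hx2 : (φ z ^ 2)⁻¹ = ((φ z)⁻¹) ^ 2 := (inv_pow (φ z) 2).symm
  have h5 : -(b + φ z ^ 2) / φ z ^ 2 = -(b * ((φ z)⁻¹) ^ 2 + 1) := by
    field_simp
  rw [h3, hx2, h5]
  push_cast
  linear_combination ((a₀ + a₀ * b * ((φ z)⁻¹) ^ 2) ^ 2) *
    (((n + 1) * (1 + b * ((φ z)⁻¹) ^ 2) / 2 - 1) * h1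
      - (n - 1) ^ 2 * (1 + b * ((φ z)⁻¹) ^ 2) / 2 * h2)
end

section
/- (PHI-four, Case II.) Let n, λ, β, α, c ∈ ℂ with β ≠ 0, n ≠ 1 and c² ≠ α. Set b = λ(n-1)²/(4(c²-α)), a₀ = λ(n+1)/(2β), and a₂ = 2(c²-α)(n+1)/(β(n-1)²). Let S ⊆ ℂ be open and let φ : ℂ → ℂ be differentiable on S with φ'(z) = b + φ(z)² for all z ∈ S. Then V := a₀ + a₂·φ² satisfies -λ·(n-1)²·V² + β·(n-1)²·V³ + (α - c²)·(n-1)·V·V'' + (α - c²)·(2-n)·(V')² = 0 on S. -/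
set_option maxHeartbeats 2000000

/-- PHI-four, Case II: with `b = λ(n-1)²/(4(c²-α))`, `a₀ = λ(n+1)/(2β)`,
`a₂ = 2(c²-α)(n+1)/(β(n-1)²)`, and `φ` a solution of the Riccati equation
`φ' = b + φ²` on an open set `S`, the function `V = a₀ + a₂·φ²` satisfies
equation (m3nd4) on `S`. -/
theorem PHI_four_case_II
    (n lam β α c : ℂ) (hβ : β ≠ 0) (hn : n ≠ 1) (hc : c ^ 2 ≠ α)
    (S : Set ℂ) (hS : IsOpen S) (φ : ℂ → ℂ)
    (hφdiff : ∀ z ∈ S, DifferentiableAt ℂ φ z)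
    (hφ : ∀ z ∈ S, deriv φ z = lam * (n - 1) ^ 2 / (4 * (c ^ 2 - α)) + φ z ^ 2)
    (V : ℂ → ℂ)
    (hV : ∀ z, V z = lam * (n + 1) / (2 * β)
        + 2 * (c ^ 2 - α) * (n + 1) / (β * (n - 1) ^ 2) * φ z ^ 2) :
    ∀ z ∈ S,
      -lam * (n - 1) ^ 2 * V z ^ 2 + β * (n - 1) ^ 2 * V z ^ 3
        + (α - c ^ 2) * (n - 1) * V z * deriv (deriv V) z
        + (α - c ^ 2) * (2 - n) * (deriv V z) ^ 2 = 0 := by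
  set b : ℂ := lam * (n - 1) ^ 2 / (4 * (c ^ 2 - α)) with hb
  set a₂ : ℂ := 2 * (c ^ 2 - α) * (n + 1) / (β * (n - 1) ^ 2) with ha₂
  have hn1 : (n - 1) ≠ 0 := sub_ne_zero.mpr hn
  have hca : (c ^ 2 - α) ≠ 0 := sub_ne_zero.mpr hc
  -- first derivative
  have hVd : ∀ z ∈ S, HasDerivAt V (a₂ * (2 * φ z * (b + φ z ^ 2))) z := by
    intro z hz
    have hφz : HasDerivAt φ (b + φ z ^ 2) z := by
      have := (hφdiff z hz).hasDerivAt
      rwa [hφ z hz] at this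
    have h1 : HasDerivAt (fun z => lam * (n + 1) / (2 * β) + a₂ * φ z ^ 2)
        (a₂ * (2 * φ z * (b + φ z ^ 2))) z := by
      have := ((hφz.pow 2).const_mul a₂).const_add (lam * (n + 1) / (2 * β))
      refine this.congr_deriv ?_
      ring
    have : V = fun z => lam * (n + 1) / (2 * β) + a₂ * φ z ^ 2 := funext hV
    rw [this]; exact h1
  have hV1 : ∀ z ∈ S, deriv V z = a₂ * (2 * φ z * (b + φ z ^ 2)) :=
    fun z hz => (hVd z hz).deriv
  intro z hz
  -- second derivative at z
  have hdd : deriv (deriv V) z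
      = a₂ * (2 * ((b + φ z ^ 2) * (b + φ z ^ 2) + φ z * (2 * φ z * (b + φ z ^ 2)))) := by
    have heq : deriv V =ᶠ[nhds z] fun w => a₂ * (2 * φ w * (b + φ w ^ 2)) := by
      filter_upwards [hS.mem_nhds hz] with w hw using hV1 w hw
    rw [Filter.EventuallyEq.deriv_eq heq]
    have hφz : HasDerivAt φ (b + φ z ^ 2) z := by
      have := (hφdiff z hz).hasDerivAt
      rwa [hφ z hz] at this
    have h2 : HasDerivAt (fun w => a₂ * (2 * φ w * (b + φ w ^ 2)))
        (a₂ * (2 * ((b + φ z ^ 2) * (b + φ z ^ 2) + φ z * (2 * φ z * (b + φ z ^ 2))))) z := by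
      have hmul : HasDerivAt (fun w => 2 * φ w * (b + φ w ^ 2))
          ((2 * (b + φ z ^ 2)) * (b + φ z ^ 2)
            + (2 * φ z) * (2 * φ z * (b + φ z ^ 2))) z := by
        have := ((hφz.const_mul 2).mul ((hφz.pow 2).const_add b))
        refine this.congr_deriv ?_
        rw [Pi.pow_apply]; ring
      have := hmul.const_mul a₂
      refine this.congr_deriv ?_
      ring
    exact h2.deriv
  have h0 : lam * (n + 1) / (2 * β) = a₂ * b := by
    rw [ha₂, hb]; field_simp; ring
  have h1 : β * (n - 1) ^ 2 * a₂ = 2 * (c ^ 2 - α) * (n + 1) := by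
    rw [ha₂]; field_simp
  have h2 : lam * (n - 1) ^ 2 = 4 * (c ^ 2 - α) * b := by
    rw [hb]; field_simp
  rw [hV1 z hz, hdd, hV z, h0]
  linear_combination (a₂ ^ 2 * (b + φ z ^ 2) ^ 3) * h1
    - (a₂ ^ 2 * (b + φ z ^ 2) ^ 2) * h2
end

section
/- (PHI-four, Cases III/IV.) Let n, λ, β, α, c, b ∈ ℂ with β ≠ 0, b ≠ 0, and suppose c² - α = λ(n-1)²/(16b). Set a₀ = λ(n+1)/(4β), a₂ = (n+1)λ/(8βb), and b₂ = (n+1)λb/(8β). Let S ⊆ ℂ be open and let φ : ℂ → ℂ be differentiable on S with φ'(z) = b + φ(z)² and φ(z) ≠ 0 for all z ∈ S. Then V := a₀ + a₂·φ² + b₂·φ⁻² satisfies -λ·(n-1)²·V² + β·(n-1)²·V³ + (α - c²)·(n-1)·V·V'' + (α - c²)·(2-n)·(V')² = 0 on S. -/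
set_option maxHeartbeats 2000000


/-- PHI-four, Cases III/IV: with `c² - α = λ(n-1)²/(16b)`, `a₀ = λ(n+1)/(4β)`,
`a₂ = (n+1)λ/(8βb)`, `b₂ = (n+1)λb/(8β)`, and `φ` a nonvanishing solution of the
Riccati equation `φ' = b + φ²` on an open set `S`, the function
`V = a₀ + a₂·φ² + b₂·φ⁻²` satisfies equation (m3nd4) on `S`. -/
theorem PHI_four_case_III_IV
    (n lam β α c b : ℂ) (hβ : β ≠ 0) (hb : b ≠ 0)
    (hc : c ^ 2 - α = lam * (n - 1) ^ 2 / (16 * b))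
    (S : Set ℂ) (hS : IsOpen S) (φ : ℂ → ℂ)
    (hφdiff : ∀ z ∈ S, DifferentiableAt ℂ φ z)
    (hφ : ∀ z ∈ S, deriv φ z = b + φ z ^ 2)
    (hφne : ∀ z ∈ S, φ z ≠ 0)
    (V : ℂ → ℂ)
    (hV : ∀ z, V z = lam * (n + 1) / (4 * β)
        + (n + 1) * lam / (8 * β * b) * φ z ^ 2
        + (n + 1) * lam * b / (8 * β) * (φ z ^ 2)⁻¹) :
    ∀ z ∈ S,
      -lam * (n - 1) ^ 2 * V z ^ 2 + β * (n - 1) ^ 2 * V z ^ 3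
        + (α - c ^ 2) * (n - 1) * V z * deriv (deriv V) z
        + (α - c ^ 2) * (2 - n) * (deriv V z) ^ 2 = 0 := by
  set a2 : ℂ := (n + 1) * lam / (8 * β * b) with ha2
  set b2 : ℂ := (n + 1) * lam * b / (8 * β) with hb2
  -- derivative of V on S
  have hasV : ∀ w ∈ S, HasDerivAt V
      (a2 * ((2 : ℕ) * φ w ^ 1 * (b + φ w ^ 2))
        + b2 * (-((2 : ℕ) * φ w ^ 1 * (b + φ w ^ 2)) / (φ w ^ 2) ^ 2)) w := by
    intro w hw
    have hφ' : HasDerivAt φ (b + φ w ^ 2) w := by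
      have h := (hφdiff w hw).hasDerivAt
      rwa [hφ w hw] at h
    have hsq : HasDerivAt (fun z => φ z ^ 2) ((2 : ℕ) * φ w ^ 1 * (b + φ w ^ 2)) w :=
      hφ'.pow 2
    have hinv : HasDerivAt (fun z => (φ z ^ 2)⁻¹)
        (-((2 : ℕ) * φ w ^ 1 * (b + φ w ^ 2)) / (φ w ^ 2) ^ 2) w :=
      hsq.inv (pow_ne_zero 2 (hφne w hw))
    have : HasDerivAt (fun z => lam * (n + 1) / (4 * β) + a2 * φ z ^ 2 + b2 * (φ z ^ 2)⁻¹)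
        (a2 * ((2 : ℕ) * φ w ^ 1 * (b + φ w ^ 2))
          + b2 * (-((2 : ℕ) * φ w ^ 1 * (b + φ w ^ 2)) / (φ w ^ 2) ^ 2)) w := by
      have h1 := (hsq.const_mul a2).const_add (lam * (n + 1) / (4 * β))
      exact h1.add (hinv.const_mul b2)
    have hVeq : V = fun z => lam * (n + 1) / (4 * β) + a2 * φ z ^ 2 + b2 * (φ z ^ 2)⁻¹ :=
      funext fun z => hV z
    rw [hVeq]
    exact this
  intro z hz
  have hx := hφne z hz
  -- first derivative value
  have hderivV : ∀ w ∈ S, deriv V w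
      = a2 * ((2 : ℕ) * φ w ^ 1 * (b + φ w ^ 2))
        + b2 * (-((2 : ℕ) * φ w ^ 1 * (b + φ w ^ 2)) / (φ w ^ 2) ^ 2) :=
    fun w hw => (hasV w hw).deriv
  -- second derivative: deriv V agrees with F near z
  set F : ℂ → ℂ := fun w => a2 * ((2 : ℕ) * φ w ^ 1 * (b + φ w ^ 2))
      + b2 * (-((2 : ℕ) * φ w ^ 1 * (b + φ w ^ 2)) / (φ w ^ 2) ^ 2) with hF
  have hEv : deriv V =ᶠ[nhds z] F := by
    filter_upwards [hS.mem_nhds hz] with w hw using hderivV w hw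
  have hφ'z : HasDerivAt φ (b + φ z ^ 2) z := by
    have h := (hφdiff z hz).hasDerivAt
    rwa [hφ z hz] at h
  have hsq : HasDerivAt (fun w => φ w ^ 2) ((2 : ℕ) * φ z ^ 1 * (b + φ z ^ 2)) z :=
    hφ'z.pow 2
  have hd : HasDerivAt (fun w => b + φ w ^ 2) ((2 : ℕ) * φ z ^ 1 * (b + φ z ^ 2)) z :=
    hsq.const_add b
  have hφ1 : HasDerivAt (fun w => φ w ^ 1) ((1 : ℕ) * φ z ^ 0 * (b + φ z ^ 2)) z :=
    hφ'z.pow 1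
  have hnum : HasDerivAt (fun w => (2 : ℕ) * φ w ^ 1 * (b + φ w ^ 2))
      (((2 : ℕ) * ((1 : ℕ) * φ z ^ 0 * (b + φ z ^ 2))) * (b + φ z ^ 2)
        + ((2 : ℕ) * φ z ^ 1) * ((2 : ℕ) * φ z ^ 1 * (b + φ z ^ 2))) z :=
    (hφ1.const_mul ((2 : ℕ) : ℂ)).mul hd
  have hden : HasDerivAt (fun w => (φ w ^ 2) ^ 2)
      ((2 : ℕ) * (φ z ^ 2) ^ 1 * ((2 : ℕ) * φ z ^ 1 * (b + φ z ^ 2))) z :=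
    hsq.pow 2
  have hdenne : (φ z ^ 2) ^ 2 ≠ 0 := pow_ne_zero 2 (pow_ne_zero 2 hx)
  have hfrac : HasDerivAt (fun w => ((2 : ℕ) * φ w ^ 1 * (b + φ w ^ 2)) / (φ w ^ 2) ^ 2)
      (((((2 : ℕ) * ((1 : ℕ) * φ z ^ 0 * (b + φ z ^ 2))) * (b + φ z ^ 2)
        + ((2 : ℕ) * φ z ^ 1) * ((2 : ℕ) * φ z ^ 1 * (b + φ z ^ 2))) * ((φ z ^ 2) ^ 2)
        - ((2 : ℕ) * φ z ^ 1 * (b + φ z ^ 2))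
          * ((2 : ℕ) * (φ z ^ 2) ^ 1 * ((2 : ℕ) * φ z ^ 1 * (b + φ z ^ 2))))
        / ((φ z ^ 2) ^ 2) ^ 2) z :=
    hnum.div hden hdenne
  have hFd : HasDerivAt F
      (a2 * (((2 : ℕ) * ((1 : ℕ) * φ z ^ 0 * (b + φ z ^ 2))) * (b + φ z ^ 2)
        + ((2 : ℕ) * φ z ^ 1) * ((2 : ℕ) * φ z ^ 1 * (b + φ z ^ 2)))
        + b2 * (-(((((2 : ℕ) * ((1 : ℕ) * φ z ^ 0 * (b + φ z ^ 2))) * (b + φ z ^ 2)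
        + ((2 : ℕ) * φ z ^ 1) * ((2 : ℕ) * φ z ^ 1 * (b + φ z ^ 2))) * ((φ z ^ 2) ^ 2)
        - ((2 : ℕ) * φ z ^ 1 * (b + φ z ^ 2))
          * ((2 : ℕ) * (φ z ^ 2) ^ 1 * ((2 : ℕ) * φ z ^ 1 * (b + φ z ^ 2))))
        / ((φ z ^ 2) ^ 2) ^ 2))) z := by
    have := (hnum.const_mul a2).add ((hfrac.neg).const_mul b2)
    simpa [hF, neg_div, Pi.add_def] using this
  have hDD : deriv (deriv V) z
      = a2 * (((2 : ℕ) * ((1 : ℕ) * φ z ^ 0 * (b + φ z ^ 2))) * (b + φ z ^ 2)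
        + ((2 : ℕ) * φ z ^ 1) * ((2 : ℕ) * φ z ^ 1 * (b + φ z ^ 2)))
        + b2 * (-(((((2 : ℕ) * ((1 : ℕ) * φ z ^ 0 * (b + φ z ^ 2))) * (b + φ z ^ 2)
        + ((2 : ℕ) * φ z ^ 1) * ((2 : ℕ) * φ z ^ 1 * (b + φ z ^ 2))) * ((φ z ^ 2) ^ 2)
        - ((2 : ℕ) * φ z ^ 1 * (b + φ z ^ 2))
          * ((2 : ℕ) * (φ z ^ 2) ^ 1 * ((2 : ℕ) * φ z ^ 1 * (b + φ z ^ 2))))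
        / ((φ z ^ 2) ^ 2) ^ 2)) := by
    rw [hEv.deriv_eq]
    exact hFd.deriv
  have hA : α - c ^ 2 = -(lam * (n - 1) ^ 2 / (16 * b)) := by linear_combination -hc
  have hx2 : φ z ^ 2 ≠ 0 := pow_ne_zero 2 hx
  have hVz : V z = (n + 1) * lam * (b + φ z ^ 2) ^ 2 / (8 * β * b * φ z ^ 2) := by
    rw [hV z, ha2, hb2]
    field_simp
    try rw [div_eq_iff (by simp [hβ, hb, hx])]
    ring
  have hV1 : deriv V z
      = (n + 1) * lam * (b + φ z ^ 2) ^ 2 * (φ z ^ 2 - b) / (4 * β * b * φ z ^ 3) := by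
    rw [hderivV z hz, ha2, hb2]
    push_cast
    field_simp
    try rw [div_eq_iff (by simp [hβ, hb, hx])]
    ring
  have hV2 : deriv (deriv V) z
      = (n + 1) * lam * (b + φ z ^ 2) ^ 2 * (3 * φ z ^ 4 - 2 * b * φ z ^ 2 + 3 * b ^ 2)
        / (4 * β * b * φ z ^ 4) := by
    rw [hDD, ha2, hb2]
    push_cast
    field_simp
    try rw [div_eq_iff (by simp [hβ, hb, hx])]
    ring
  rw [hVz, hV1, hV2, hA]
  field_simp
  ring
end

section
/- Let a₀ ∈ ℂ and set λ = -a₀. Then the function U(z) = a₀·(1 + i·tan(a₀·z/2)) satisfies U''(z) + (1/2)·U(z)³ + (3/2)·λ·U(z)² + λ²·U(z) = 0 at every z ∈ ℂ with cos(a₀·z/2) ≠ 0, where primes denote complex derivatives and tan is the complex tangent. -/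
open Complex

/-- With `λ = -a₀`, the function `U(z) = a₀·(1 + i·tan(a₀·z/2))` satisfies
`U'' + (1/2)·U³ + (3/2)·λ·U² + λ²·U = 0` at every `z ∈ ℂ` with
`cos(a₀·z/2) ≠ 0`. -/
theorem variant_Boussinesq_ODE_solution_case_I
    (a₀ : ℂ) (lam : ℂ) (hlam : lam = -a₀)
    (U : ℂ → ℂ) (hU : ∀ z, U z = a₀ * (1 + Complex.I * Complex.tan (a₀ * z / 2))) :
    ∀ z : ℂ, Complex.cos (a₀ * z / 2) ≠ 0 →
      deriv (deriv U) z + (1 / 2) * U z ^ 3 + (3 / 2) * lam * U z ^ 2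
        + lam ^ 2 * U z = 0 := by
  intro z hz
  set S : Set ℂ := {w | Complex.cos (a₀ * w / 2) ≠ 0} with hS
  have hSopen : IsOpen S := by
    have : Continuous fun w : ℂ => Complex.cos (a₀ * w / 2) := by continuity
    exact isOpen_compl_iff.mpr (isClosed_singleton.preimage this) |>.mono le_rfl
  set V : ℂ → ℂ := fun w =>
    a₀ * (Complex.I * ((1 + Complex.tan (a₀ * w / 2) ^ 2) * (a₀ / 2))) with hV
  have hlin : ∀ w : ℂ, HasDerivAt (fun w : ℂ => a₀ * w / 2) (a₀ / 2) w := by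
    intro w
    simpa using ((hasDerivAt_id w).const_mul a₀).div_const 2
  have htan : ∀ w ∈ S, HasDerivAt (fun w => Complex.tan (a₀ * w / 2))
      ((1 + Complex.tan (a₀ * w / 2) ^ 2) * (a₀ / 2)) w := by
    intro w hw
    have h2 := (Complex.hasDerivAt_tan hw).comp w (hlin w)
    have : (1 : ℂ) / Complex.cos (a₀ * w / 2) ^ 2
        = 1 + Complex.tan (a₀ * w / 2) ^ 2 := by
      have hw' : Complex.cos (a₀ * w / 2) ≠ 0 := hw
      rw [Complex.tan_eq_sin_div_cos]
      field_simp
      rw [Complex.cos_sq_add_sin_sq]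
    rwa [this] at h2
  have hUderiv : ∀ w ∈ S, HasDerivAt U (V w) w := by
    intro w hw
    have h := (((htan w hw).const_mul Complex.I).const_add 1).const_mul a₀
    exact h.congr_of_eventuallyEq (Filter.Eventually.of_forall fun x => (hU x))
  have hmem : ∀ᶠ w in nhds z, w ∈ S := hSopen.mem_nhds hz
  have hdU : deriv U =ᶠ[nhds z] V :=
    hmem.mono fun w hw => (hUderiv w hw).deriv
  have hVderiv : HasDerivAt V
      (a₀ * (Complex.I * ((2 * Complex.tan (a₀ * z / 2)
        * ((1 + Complex.tan (a₀ * z / 2) ^ 2) * (a₀ / 2))) * (a₀ / 2)))) z := by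
    have h := (((((htan z hz).pow 2).const_add 1).mul_const (a₀ / 2)).const_mul
      Complex.I).const_mul a₀
    have h2 := h.congr_of_eventuallyEq (Filter.Eventually.of_forall
      (fun x => show V x = _ by rw [hV]; rfl))
    convert h2 using 1
    · rfl
    · rfl
    · norm_num
  have hkey : deriv (deriv U) z
      = a₀ * (Complex.I * ((2 * Complex.tan (a₀ * z / 2)
        * ((1 + Complex.tan (a₀ * z / 2) ^ 2) * (a₀ / 2))) * (a₀ / 2))) := by
    rw [hdU.deriv_eq]
    exact hVderiv.deriv
  rw [hkey, hU z, hlam]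
  ring_nf
  rw [show (Complex.I : ℂ) ^ 3 = -Complex.I from by
    rw [pow_succ, Complex.I_sq]; ring]
  ring
end

section
/- (Variant Boussinesq, Case I.) Let a₀ ∈ ℂ. Define u, v : ℝ × ℝ → ℂ by u(x,t) = a₀·(1 + i·tan((i·a₀/2)·(x - a₀·t))) and v(x,t) = a₀·u(x,t) - (1/2)·u(x,t)², where tan is the complex tangent. Then at every (x,t) ∈ ℝ × ℝ with cos((i·a₀/2)·(x - a₀·t)) ≠ 0, the pair (u,v) satisfies the variant Boussinesq equations: ∂ₜu + ∂ₓv + u·∂ₓu = 0 and ∂ₜv + ∂ₓ(u·v) + ∂ₓ∂ₓ∂ₓu = 0, where partial derivatives are derivatives of the one-variable sections. -/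
open Complex

private lemma sq_hasDerivAt {f : ℝ → ℂ} {f' : ℂ} {x : ℝ} (hf : HasDerivAt f f' x) :
    HasDerivAt (fun y : ℝ => f y ^ 2) (2 * f x * f') x := by
  have h := hf.mul hf
  have hv : f' * f x + f x * f' = 2 * f x * f' := by ring
  rw [← hv]
  have h2 : (fun y : ℝ => f y ^ 2) = f * f := by ext y; simp [pow_two]
  rw [h2]; exact h

private lemma tanlin_hasDerivAt {c d : ℂ} {x : ℝ} (h : Complex.cos (c * (x : ℂ) + d) ≠ 0) :
    HasDerivAt (fun y : ℝ => Complex.tan (c * (y : ℂ) + d))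
      (c * (1 + Complex.tan (c * (x : ℂ) + d) ^ 2)) x := by
  have hlin : HasDerivAt (fun z : ℂ => c * z + d) c ((x : ℝ) : ℂ) := by
    simpa using ((hasDerivAt_id ((x : ℂ))).const_mul c).add_const d
  have hg : HasDerivAt (fun z : ℂ => Complex.tan (c * z + d))
      (1 / Complex.cos (c * (x : ℂ) + d) ^ 2 * c) ((x : ℝ) : ℂ) :=
    by have := (Complex.hasDerivAt_tan h).comp ((x : ℝ) : ℂ) hlin; exact this
  have := hg.comp_ofReal
  convert this using 1
  rw [one_div, ← Complex.inv_one_add_tan_sq h, inv_inv]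
  ring

private lemma ev_cos {c d : ℂ} {x : ℝ} (h : Complex.cos (c * (x : ℂ) + d) ≠ 0) :
    ∀ᶠ y : ℝ in nhds x, Complex.cos (c * (y : ℂ) + d) ≠ 0 := by
  have hc : ContinuousAt (fun y : ℝ => Complex.cos (c * (y : ℂ) + d)) x := by fun_prop
  exact hc.eventually_ne h

private lemma hasDerivAt_U (a : ℂ) {c d : ℂ} {x : ℝ}
    (h : Complex.cos (c * (x : ℂ) + d) ≠ 0) :
    HasDerivAt (fun y : ℝ => a * (1 + Complex.I * Complex.tan (c * (y : ℂ) + d)))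
      (a * Complex.I * c * (1 + Complex.tan (c * (x : ℂ) + d) ^ 2)) x := by
  have := (((tanlin_hasDerivAt h).const_mul Complex.I).const_add 1).const_mul a
  exact this.congr_deriv (by ring)

private lemma hasDerivAt_G1 (k : ℂ) {c d : ℂ} {x : ℝ}
    (h : Complex.cos (c * (x : ℂ) + d) ≠ 0) :
    HasDerivAt (fun y : ℝ => k * (1 + Complex.tan (c * (y : ℂ) + d) ^ 2))
      (k * (2 * Complex.tan (c * (x : ℂ) + d)
        * (c * (1 + Complex.tan (c * (x : ℂ) + d) ^ 2)))) x := by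
  exact ((sq_hasDerivAt (tanlin_hasDerivAt h)).const_add 1).const_mul k

private lemma E1 (a : ℂ) {c d : ℂ} {x : ℝ} (h : Complex.cos (c * (x : ℂ) + d) ≠ 0) :
    deriv (fun y : ℝ => a * (1 + Complex.I * Complex.tan (c * (y : ℂ) + d))) =ᶠ[nhds x]
      fun y : ℝ => a * Complex.I * c * (1 + Complex.tan (c * (y : ℂ) + d) ^ 2) :=
  (ev_cos h).mono fun _ hy => (hasDerivAt_U a hy).deriv

private lemma E2 (a : ℂ) {c d : ℂ} {x : ℝ} (h : Complex.cos (c * (x : ℂ) + d) ≠ 0) :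
    deriv (deriv (fun y : ℝ => a * (1 + Complex.I * Complex.tan (c * (y : ℂ) + d))))
      =ᶠ[nhds x]
      fun y : ℝ => a * Complex.I * c *
        (2 * Complex.tan (c * (y : ℂ) + d) * (c * (1 + Complex.tan (c * (y : ℂ) + d) ^ 2))) :=
  (ev_cos h).mono fun y hy => by
    rw [(E1 a hy).deriv_eq]
    exact (hasDerivAt_G1 (a * Complex.I * c) hy).deriv

private lemma hasDerivAt_G2 (k : ℂ) {c d : ℂ} {x : ℝ}
    (h : Complex.cos (c * (x : ℂ) + d) ≠ 0) :
    HasDerivAt (fun y : ℝ => k *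
        (2 * Complex.tan (c * (y : ℂ) + d) * (c * (1 + Complex.tan (c * (y : ℂ) + d) ^ 2))))
      (k * (2 * c ^ 2 * (1 + Complex.tan (c * (x : ℂ) + d) ^ 2)
        * (1 + 3 * Complex.tan (c * (x : ℂ) + d) ^ 2))) x := by
  have h1 := (tanlin_hasDerivAt h).const_mul (2 : ℂ)
  have h2 := hasDerivAt_G1 c h
  have := (h1.mul h2).const_mul k
  exact this.congr_deriv (by ring)

/-- Variant Boussinesq, Case I: `u(x,t) = a₀(1 + i·tan((i·a₀/2)(x - a₀t)))`,
`v = a₀·u - u²/2` solve `uₜ + vₓ + u·uₓ = 0` and `vₜ + (u·v)ₓ + uₓₓₓ = 0`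
wherever `cos((i·a₀/2)(x - a₀t)) ≠ 0`. -/
theorem variant_Boussinesq_solution_case_I
    (a₀ : ℂ) (u v : ℝ → ℝ → ℂ)
    (hu : ∀ x t : ℝ, u x t
      = a₀ * (1 + Complex.I *
          Complex.tan ((Complex.I * a₀ / 2) * ((x : ℂ) - a₀ * (t : ℂ)))))
    (hv : ∀ x t : ℝ, v x t = a₀ * u x t - (1 / 2) * (u x t) ^ 2) :
    ∀ x t : ℝ, Complex.cos ((Complex.I * a₀ / 2) * ((x : ℂ) - a₀ * (t : ℂ))) ≠ 0 →
      (deriv (fun t' : ℝ => u x t') t + deriv (fun x' : ℝ => v x' t) x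
        + u x t * deriv (fun x' : ℝ => u x' t) x = 0) ∧
      (deriv (fun t' : ℝ => v x t') t + deriv (fun x' : ℝ => u x' t * v x' t) x
        + deriv (fun x₁ : ℝ =>
            deriv (fun x₂ : ℝ => deriv (fun x₃ : ℝ => u x₃ t) x₂) x₁) x = 0) := by
  intro x t hx
  set c : ℂ := Complex.I * a₀ / 2 with hc
  set d : ℂ := -(c * a₀ * (t : ℂ)) with hd
  set ct : ℂ := -(c * a₀) with hct
  set dt : ℂ := c * (x : ℂ) with hdt
  have hax : ∀ y : ℝ, c * ((y : ℂ) - a₀ * (t : ℂ)) = c * (y : ℂ) + d := fun y => by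
    rw [hd]; ring
  have hat : ∀ r : ℝ, c * ((x : ℂ) - a₀ * (r : ℂ)) = ct * (r : ℂ) + dt := fun r => by
    rw [hct, hdt]; ring
  have hx1 : Complex.cos (c * (x : ℂ) + d) ≠ 0 := by rw [← hax x]; exact hx
  have hx2 : Complex.cos (ct * (t : ℂ) + dt) ≠ 0 := by rw [← hat t]; exact hx
  have hst : Complex.tan (ct * (t : ℂ) + dt) = Complex.tan (c * (x : ℂ) + d) := by
    rw [← hat t, hax x]
  simp only [hu, hv, hax, hat]
  have hU := hasDerivAt_U a₀ hx1
  have hUt := hasDerivAt_U a₀ hx2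
  have hVx : HasDerivAt (fun y : ℝ => a₀ * (a₀ * (1 + Complex.I * Complex.tan (c * (y : ℂ) + d)))
      - 1 / 2 * (a₀ * (1 + Complex.I * Complex.tan (c * (y : ℂ) + d))) ^ 2) _ x :=
    (hU.const_mul a₀).sub ((sq_hasDerivAt hU).const_mul ((1 : ℂ) / 2))
  have hVt : HasDerivAt (fun y : ℝ => a₀ * (a₀ * (1 + Complex.I * Complex.tan (ct * (y : ℂ) + dt)))
      - 1 / 2 * (a₀ * (1 + Complex.I * Complex.tan (ct * (y : ℂ) + dt))) ^ 2) _ t :=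
    (hUt.const_mul a₀).sub ((sq_hasDerivAt hUt).const_mul ((1 : ℂ) / 2))
  have hUV : HasDerivAt (fun y : ℝ => a₀ * (1 + Complex.I * Complex.tan (c * (y : ℂ) + d)) *
      (a₀ * (a₀ * (1 + Complex.I * Complex.tan (c * (y : ℂ) + d)))
      - 1 / 2 * (a₀ * (1 + Complex.I * Complex.tan (c * (y : ℂ) + d))) ^ 2)) _ x := hU.mul hVx
  constructor
  · rw [hUt.deriv, hVx.deriv, hU.deriv, hst, hct]
    ring
  · have T3 : deriv (fun x₁ : ℝ => deriv (fun x₂ : ℝ => deriv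
          (fun x' : ℝ => a₀ * (1 + Complex.I * Complex.tan (c * (x' : ℂ) + d))) x₂) x₁) x
        = a₀ * Complex.I * c * (2 * c ^ 2 * (1 + Complex.tan (c * (x : ℂ) + d) ^ 2)
            * (1 + 3 * Complex.tan (c * (x : ℂ) + d) ^ 2)) := by
      rw [(E2 a₀ hx1).deriv_eq]
      exact (hasDerivAt_G2 (a₀ * Complex.I * c) hx1).deriv
    rw [hVt.deriv, hUV.deriv, T3, hst, hct, hc]
    linear_combination (a₀ ^ 4 * Complex.I ^ 2 *
      (1 + Complex.tan (Complex.I * a₀ / 2 * (x : ℂ) + d) ^ 2) / 4) * Complex.I_sq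
end

section
/- (Variant Boussinesq, Case II.) Let a₀ ∈ ℂ. Define u, v : ℝ × ℝ → ℂ by u(x,t) = a₀·(1 - i·tan((i·a₀/2)·(x - a₀·t))) and v(x,t) = a₀·u(x,t) - (1/2)·u(x,t)², where tan is the complex tangent. Then at every (x,t) ∈ ℝ × ℝ with cos((i·a₀/2)·(x - a₀·t)) ≠ 0, the pair (u,v) satisfies the variant Boussinesq equations: ∂ₜu + ∂ₓv + u·∂ₓu = 0 and ∂ₜv + ∂ₓ(u·v) + ∂ₓ∂ₓ∂ₓu = 0, where partial derivatives are derivatives of the one-variable sections. -/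
open Complex

private lemma aux_sec_x (a₀ : ℂ) (t x : ℝ) (g : ℂ → ℂ) (g' : ℂ)
    (h : HasDerivAt g g' ((x : ℂ) - a₀ * t)) :
    HasDerivAt (fun x' : ℝ => g ((x' : ℂ) - a₀ * t)) g' x := by
  have h1 : HasDerivAt (fun x' : ℝ => (x' : ℂ) - a₀ * t) 1 x := by
    simpa using (Complex.ofRealCLM.hasDerivAt (x := x)).sub_const (a₀ * t)
  simpa [Function.comp_def] using h.comp x h1

private lemma aux_sec_t (a₀ : ℂ) (t x : ℝ) (g : ℂ → ℂ) (g' : ℂ)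
    (h : HasDerivAt g g' ((x : ℂ) - a₀ * t)) :
    HasDerivAt (fun t' : ℝ => g ((x : ℂ) - a₀ * t')) (g' * (-a₀)) t := by
  have h1 : HasDerivAt (fun t' : ℝ => (x : ℂ) - a₀ * t') (-a₀) t := by
    simpa using ((Complex.ofRealCLM.hasDerivAt (x := t)).const_mul a₀).const_sub (x : ℂ)
  simpa [Function.comp_def] using h.comp t h1

private lemma aux_tan (c : ℂ) (w : ℂ) (h : Complex.cos (c * w) ≠ 0) :
    HasDerivAt (fun w' : ℂ => Complex.tan (c * w')) (c * (Complex.tan (c * w) ^ 2 + 1)) w := by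
  have h1 : HasDerivAt (fun w' : ℂ => c * w') c w := by
    simpa using (hasDerivAt_id w).const_mul c
  have h2 := (Complex.hasDerivAt_tan h).comp w h1
  refine h2.congr_deriv ?_
  have h3 : (1 + Complex.tan (c * w) ^ 2)⁻¹ = Complex.cos (c * w) ^ 2 :=
    Complex.inv_one_add_tan_sq h
  have h4 : Complex.cos (c * w) ^ 2 ≠ 0 := pow_ne_zero 2 h
  rw [one_div, ← h3, inv_inv]
  ring

/-- Variant Boussinesq, Case II: `u(x,t) = a₀(1 - i·tan((i·a₀/2)(x - a₀t)))`,
`v = a₀·u - u²/2` solve `uₜ + vₓ + u·uₓ = 0` and `vₜ + (u·v)ₓ + uₓₓₓ = 0`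
wherever `cos((i·a₀/2)(x - a₀t)) ≠ 0`. -/
theorem variant_Boussinesq_solution_case_II
    (a₀ : ℂ) (u v : ℝ → ℝ → ℂ)
    (hu : ∀ x t : ℝ, u x t
      = a₀ * (1 - Complex.I *
          Complex.tan ((Complex.I * a₀ / 2) * ((x : ℂ) - a₀ * (t : ℂ)))))
    (hv : ∀ x t : ℝ, v x t = a₀ * u x t - (1 / 2) * (u x t) ^ 2) :
    ∀ x t : ℝ, Complex.cos ((Complex.I * a₀ / 2) * ((x : ℂ) - a₀ * (t : ℂ))) ≠ 0 →
      (deriv (fun t' : ℝ => u x t') t + deriv (fun x' : ℝ => v x' t) x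
        + u x t * deriv (fun x' : ℝ => u x' t) x = 0) ∧
      (deriv (fun t' : ℝ => v x t') t + deriv (fun x' : ℝ => u x' t * v x' t) x
        + deriv (fun x₁ : ℝ =>
            deriv (fun x₂ : ℝ => deriv (fun x₃ : ℝ => u x₃ t) x₂) x₁) x = 0) := by
  intro x t hcos
  set c : ℂ := Complex.I * a₀ / 2 with hc
  -- complex building blocks
  set U : ℂ → ℂ := fun w => a₀ * (1 - Complex.I * Complex.tan (c * w)) with hUdef
  set D1 : ℂ → ℂ := fun w => -(a₀ * Complex.I * c) * (Complex.tan (c * w) ^ 2 + 1) with hD1def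
  set D2 : ℂ → ℂ := fun w =>
    -(2 * a₀ * Complex.I * c ^ 2) * Complex.tan (c * w) * (Complex.tan (c * w) ^ 2 + 1)
    with hD2def
  set D3 : ℂ → ℂ := fun w =>
    -(2 * a₀ * Complex.I * c ^ 3) * (Complex.tan (c * w) ^ 2 + 1)
      * (3 * Complex.tan (c * w) ^ 2 + 1) with hD3def
  set V : ℂ → ℂ := fun w => a₀ * U w - (1 / 2) * (U w) ^ 2 with hVdef
  have hU : ∀ w : ℂ, Complex.cos (c * w) ≠ 0 → HasDerivAt U (D1 w) w := by
    intro w hw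
    have := ((aux_tan c w hw).const_mul Complex.I).const_sub 1 |>.const_mul a₀
    refine this.congr_deriv ?_
    simp only [hD1def]; ring
  have hD1 : ∀ w : ℂ, Complex.cos (c * w) ≠ 0 → HasDerivAt D1 (D2 w) w := by
    intro w hw
    have := (((aux_tan c w hw).pow 2).add_const 1).const_mul (-(a₀ * Complex.I * c))
    refine this.congr_deriv ?_
    simp only [hD2def]; ring
  have hD2' : ∀ w : ℂ, Complex.cos (c * w) ≠ 0 → HasDerivAt D2 (D3 w) w := by
    intro w hw
    have ht := aux_tan c w hw
    have := (ht.mul ((ht.pow 2).add_const 1)).const_mul (-(2 * a₀ * Complex.I * c ^ 2))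
    have h2 : HasDerivAt D2
        (-(2 * a₀ * Complex.I * c ^ 2) *
          (c * (Complex.tan (c * w) ^ 2 + 1) * (Complex.tan (c * w) ^ 2 + 1) +
            Complex.tan (c * w) *
              ((2 : ℕ) * Complex.tan (c * w) ^ 1 * (c * (Complex.tan (c * w) ^ 2 + 1))))) w := by
      simpa only [hD2def, mul_assoc, Pi.mul_apply, Pi.pow_apply, Nat.reduceSub] using this
    convert h2 using 1
    simp only [hD3def]; push_cast; ring
  have hV : ∀ w : ℂ, Complex.cos (c * w) ≠ 0 →
      HasDerivAt V (a₀ * D1 w - U w * D1 w) w := by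
    intro w hw
    have hu' := hU w hw
    have := (hu'.const_mul a₀).sub ((hu'.pow 2).const_mul (1 / 2))
    refine this.congr_deriv ?_
    ring
  have hUV : ∀ w : ℂ, Complex.cos (c * w) ≠ 0 →
      HasDerivAt (fun w => U w * V w) (D1 w * V w + U w * (a₀ * D1 w - U w * D1 w)) w :=
    fun w hw => (hU w hw).mul (hV w hw)
  set z : ℂ := (x : ℂ) - a₀ * t with hz
  have hcz : Complex.cos (c * z) ≠ 0 := hcos
  -- real sections
  have husec : ∀ t' : ℝ, (fun x' : ℝ => u x' t') = fun x' : ℝ => U ((x' : ℂ) - a₀ * t') := by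
    intro t'; funext x'; rw [hu]
  have husec' : (fun t' : ℝ => u x t') = fun t' : ℝ => U ((x : ℂ) - a₀ * t') := by
    funext t'; rw [hu]
  have hvsec : (fun x' : ℝ => v x' t) = fun x' : ℝ => V ((x' : ℂ) - a₀ * t) := by
    funext x'; rw [hv, hu]
  have hvsec' : (fun t' : ℝ => v x t') = fun t' : ℝ => V ((x : ℂ) - a₀ * t') := by
    funext t'; rw [hv, hu]
  have huvsec : (fun x' : ℝ => u x' t * v x' t)
      = fun x' : ℝ => U ((x' : ℂ) - a₀ * t) * V ((x' : ℂ) - a₀ * t) := by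
    funext x'; rw [hv, hu]
  -- the open set where cos ≠ 0
  set O : Set ℝ := {x' : ℝ | Complex.cos (c * ((x' : ℂ) - a₀ * t)) ≠ 0} with hO
  have hOopen : IsOpen O := by
    have hcont : Continuous fun x' : ℝ => Complex.cos (c * ((x' : ℂ) - a₀ * t)) := by
      fun_prop
    exact isOpen_compl_singleton.preimage hcont
  have hxO : x ∈ O := hcz
  -- first x-derivative of u, valid on O
  have hux : ∀ x' ∈ O, deriv (fun x₃ : ℝ => u x₃ t) x' = D1 ((x' : ℂ) - a₀ * t) := by
    intro x' hx'
    rw [husec t]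
    exact (aux_sec_x a₀ t x' U _ (hU _ hx')).deriv
  -- second x-derivative, valid on O
  have huxx : ∀ x' ∈ O, deriv (fun x₂ : ℝ => deriv (fun x₃ : ℝ => u x₃ t) x₂) x'
      = D2 ((x' : ℂ) - a₀ * t) := by
    intro x' hx'
    have hev : (fun x₂ : ℝ => deriv (fun x₃ : ℝ => u x₃ t) x₂)
        =ᶠ[nhds x'] fun x₂ : ℝ => D1 ((x₂ : ℂ) - a₀ * t) := by
      filter_upwards [hOopen.mem_nhds hx'] with y hy using hux y hy
    rw [hev.deriv_eq]
    exact (aux_sec_x a₀ t x' D1 _ (hD1 _ hx')).deriv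
  -- third x-derivative at x
  have huxxx : deriv (fun x₁ : ℝ =>
      deriv (fun x₂ : ℝ => deriv (fun x₃ : ℝ => u x₃ t) x₂) x₁) x = D3 z := by
    have hev : (fun x₁ : ℝ => deriv (fun x₂ : ℝ => deriv (fun x₃ : ℝ => u x₃ t) x₂) x₁)
        =ᶠ[nhds x] fun x₁ : ℝ => D2 ((x₁ : ℂ) - a₀ * t) := by
      filter_upwards [hOopen.mem_nhds hxO] with y hy using huxx y hy
    rw [hev.deriv_eq]
    exact (aux_sec_x a₀ t x D2 _ (hD2' _ hcz)).deriv
  -- the remaining first derivatives at (x, t)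
  have hut : deriv (fun t' : ℝ => u x t') t = D1 z * (-a₀) := by
    rw [husec']
    exact (aux_sec_t a₀ t x U _ (hU _ hcz)).deriv
  have hvx : deriv (fun x' : ℝ => v x' t) x = a₀ * D1 z - U z * D1 z := by
    rw [hvsec]
    exact (aux_sec_x a₀ t x V _ (hV _ hcz)).deriv
  have hvt : deriv (fun t' : ℝ => v x t') t = (a₀ * D1 z - U z * D1 z) * (-a₀) := by
    rw [hvsec']
    exact (aux_sec_t a₀ t x V _ (hV _ hcz)).deriv
  have huvx : deriv (fun x' : ℝ => u x' t * v x' t) x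
      = D1 z * V z + U z * (a₀ * D1 z - U z * D1 z) := by
    rw [huvsec]
    exact (aux_sec_x a₀ t x (fun w => U w * V w) _ (hUV _ hcz)).deriv
  have huval : u x t = U z := by rw [hu]
  have huxval : deriv (fun x' : ℝ => u x' t) x = D1 z := hux x hxO
  constructor
  · rw [hut, hvx, huval, huxval]; ring
  · rw [hvt, huvx, huxxx]
    simp only [hUdef, hVdef, hD1def, hD3def, hc]
    set s : ℂ := Complex.tan (Complex.I * a₀ / 2 * z) with hs
    have hI : (Complex.I : ℂ) ^ 2 = -1 := Complex.I_sq
    linear_combination ((-1/4 : ℂ) * a₀^4 * s^2 * Complex.I^2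
      + (-1/4 : ℂ) * a₀^4 * Complex.I^2) * hI
end

section
/- (Variant Boussinesq, Case III.) Let a₀ ∈ ℝ. Define w(x,t) = (√2·a₀/4)·(x - a₀·t), u(x,t) = a₀ + (√2·a₀/2)·(tan(w(x,t)) + cot(w(x,t))), and v(x,t) = a₀·u(x,t) - (1/2)·u(x,t)². Then at every (x,t) ∈ ℝ × ℝ with sin(w(x,t)) ≠ 0 and cos(w(x,t)) ≠ 0, the pair (u,v) satisfies the variant Boussinesq equations: ∂ₜu + ∂ₓv + u·∂ₓu = 0 and ∂ₜv + ∂ₓ(u·v) + ∂ₓ∂ₓ∂ₓu = 0, where partial derivatives are derivatives of the one-variable sections. -/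
private lemma hasD1 (a k y : ℝ) (hs : Real.sin y ≠ 0) (hc : Real.cos y ≠ 0) :
    HasDerivAt (fun z => a + k * (Real.sin z / Real.cos z + Real.cos z / Real.sin z))
      (k * (1 / Real.cos y ^ 2 - 1 / Real.sin y ^ 2)) y := by
  have h1 := (Real.hasDerivAt_sin y).div (Real.hasDerivAt_cos y) hc
  have h2 := (Real.hasDerivAt_cos y).div (Real.hasDerivAt_sin y) hs
  have h := ((h1.add h2).const_mul k).const_add a
  refine h.congr_deriv ?_
  have hpy := Real.sin_sq_add_cos_sq y
  have e1 : Real.cos y * Real.cos y - Real.sin y * -Real.sin y = 1 := by linear_combination hpy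
  have e2 : -Real.sin y * Real.sin y - Real.cos y * Real.cos y = -1 := by linear_combination -hpy
  rw [e1, e2]; ring

private lemma hasD2 (k y : ℝ) (hs : Real.sin y ≠ 0) (hc : Real.cos y ≠ 0) :
    HasDerivAt (fun z => k * (1 / Real.cos z ^ 2 - 1 / Real.sin z ^ 2))
      (k * (2 * Real.sin y / Real.cos y ^ 3 + 2 * Real.cos y / Real.sin y ^ 3)) y := by
  have h1 := (hasDerivAt_const y (1:ℝ)).div ((Real.hasDerivAt_cos y).pow 2) (pow_ne_zero 2 hc)
  have h2 := (hasDerivAt_const y (1:ℝ)).div ((Real.hasDerivAt_sin y).pow 2) (pow_ne_zero 2 hs)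
  have h := ((h1.sub h2).const_mul k)
  refine h.congr_deriv ?_
  simp only [Pi.pow_apply]
  field_simp
  ring

private lemma hasD3 (k y : ℝ) (hs : Real.sin y ≠ 0) (hc : Real.cos y ≠ 0) :
    HasDerivAt (fun z => k * (2 * Real.sin z / Real.cos z ^ 3 + 2 * Real.cos z / Real.sin z ^ 3))
      (k * (2 / Real.cos y ^ 2 + 6 * Real.sin y ^ 2 / Real.cos y ^ 4
        - 2 / Real.sin y ^ 2 - 6 * Real.cos y ^ 2 / Real.sin y ^ 4)) y := by
  have h1 := ((Real.hasDerivAt_sin y).const_mul (2:ℝ)).div ((Real.hasDerivAt_cos y).pow 3) (pow_ne_zero 3 hc)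
  have h2 := ((Real.hasDerivAt_cos y).const_mul (2:ℝ)).div ((Real.hasDerivAt_sin y).pow 3) (pow_ne_zero 3 hs)
  have h := ((h1.add h2).const_mul k)
  refine h.congr_deriv ?_
  simp only [Pi.pow_apply]
  field_simp
  ring

/-- Variant Boussinesq, Case III: with `w(x,t) = (√2·a₀/4)(x - a₀t)`,
`u = a₀ + (√2·a₀/2)(tan w + cot w)`, `v = a₀·u - u²/2` solve
`uₜ + vₓ + u·uₓ = 0` and `vₜ + (u·v)ₓ + uₓₓₓ = 0` wherever
`sin w ≠ 0` and `cos w ≠ 0`. -/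
theorem variant_Boussinesq_solution_case_III
    (a₀ : ℝ) (w : ℝ → ℝ → ℝ) (u v : ℝ → ℝ → ℝ)
    (hw : ∀ x t : ℝ, w x t = (Real.sqrt 2 * a₀ / 4) * (x - a₀ * t))
    (hu : ∀ x t : ℝ, u x t = a₀ + (Real.sqrt 2 * a₀ / 2) *
        (Real.tan (w x t) + Real.cos (w x t) / Real.sin (w x t)))
    (hv : ∀ x t : ℝ, v x t = a₀ * u x t - (1 / 2) * (u x t) ^ 2) :
    ∀ x t : ℝ, Real.sin (w x t) ≠ 0 → Real.cos (w x t) ≠ 0 →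
      (deriv (fun t' : ℝ => u x t') t + deriv (fun x' : ℝ => v x' t) x
        + u x t * deriv (fun x' : ℝ => u x' t) x = 0) ∧
      (deriv (fun t' : ℝ => v x t') t + deriv (fun x' : ℝ => u x' t * v x' t) x
        + deriv (fun x₁ : ℝ =>
            deriv (fun x₂ : ℝ => deriv (fun x₃ : ℝ => u x₃ t) x₂) x₁) x = 0) := by
  intro x t hs hc
  set c₀ : ℝ := Real.sqrt 2 * a₀ / 4 with hc₀
  set kk : ℝ := Real.sqrt 2 * a₀ / 2 with hkk
  have hu' : ∀ x' t' : ℝ, u x' t' = a₀ + kk *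
      (Real.sin (w x' t') / Real.cos (w x' t') + Real.cos (w x' t') / Real.sin (w x' t')) := by
    intro x' t'; rw [hu, Real.tan_eq_sin_div_cos]
  -- x-direction first derivative of u, at any good point
  have hUx : ∀ x' : ℝ, Real.sin (w x' t) ≠ 0 → Real.cos (w x' t) ≠ 0 →
      HasDerivAt (fun x'' => u x'' t)
        (c₀ * (kk * (1 / Real.cos (w x' t) ^ 2 - 1 / Real.sin (w x' t) ^ 2))) x' := by
    intro x' h1 h2
    have hlin : HasDerivAt (fun x'' : ℝ => c₀ * (x'' - a₀ * t)) (c₀ * 1) x' :=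
      ((hasDerivAt_id x').sub_const (a₀ * t)).const_mul c₀
    have hg := hasD1 a₀ kk (w x' t) h1 h2
    rw [hw x' t] at hg
    have hcomp := hg.comp x' hlin
    have hfun : (fun x'' => u x'' t) =
        (fun z => a₀ + kk * (Real.sin z / Real.cos z + Real.cos z / Real.sin z)) ∘
          (fun x'' : ℝ => c₀ * (x'' - a₀ * t)) := by
      funext x''; simp only [Function.comp, hu', hw]
    rw [hfun]
    refine hcomp.congr_deriv ?_
    rw [hw x' t]; ring
  -- x-direction second derivative
  have hU2 : ∀ x' : ℝ, Real.sin (w x' t) ≠ 0 → Real.cos (w x' t) ≠ 0 →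
      HasDerivAt (fun x'' => c₀ * (kk * (1 / Real.cos (w x'' t) ^ 2 - 1 / Real.sin (w x'' t) ^ 2)))
        (c₀ ^ 2 * (kk * (2 * Real.sin (w x' t) / Real.cos (w x' t) ^ 3
          + 2 * Real.cos (w x' t) / Real.sin (w x' t) ^ 3))) x' := by
    intro x' h1 h2
    have hlin : HasDerivAt (fun x'' : ℝ => c₀ * (x'' - a₀ * t)) (c₀ * 1) x' :=
      ((hasDerivAt_id x').sub_const (a₀ * t)).const_mul c₀
    have hg := hasD2 kk (w x' t) h1 h2
    rw [hw x' t] at hg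
    have hcomp := (hg.comp x' hlin).const_mul c₀
    have hfun : (fun x'' => c₀ * (kk * (1 / Real.cos (w x'' t) ^ 2 - 1 / Real.sin (w x'' t) ^ 2))) =
        fun x'' => c₀ * (((fun z => kk * (1 / Real.cos z ^ 2 - 1 / Real.sin z ^ 2)) ∘
          (fun x'' : ℝ => c₀ * (x'' - a₀ * t))) x'') := by
      funext x''; simp only [Function.comp, hw]
    rw [hfun]
    refine hcomp.congr_deriv ?_
    rw [hw x' t]; ring
  -- x-direction third derivative, at the point itself
  have hU3 : HasDerivAt (fun x'' => c₀ ^ 2 * (kk * (2 * Real.sin (w x'' t) / Real.cos (w x'' t) ^ 3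
        + 2 * Real.cos (w x'' t) / Real.sin (w x'' t) ^ 3)))
      (c₀ ^ 3 * (kk * (2 / Real.cos (w x t) ^ 2 + 6 * Real.sin (w x t) ^ 2 / Real.cos (w x t) ^ 4
        - 2 / Real.sin (w x t) ^ 2 - 6 * Real.cos (w x t) ^ 2 / Real.sin (w x t) ^ 4))) x := by
    have hlin : HasDerivAt (fun x'' : ℝ => c₀ * (x'' - a₀ * t)) (c₀ * 1) x :=
      ((hasDerivAt_id x).sub_const (a₀ * t)).const_mul c₀
    have hg := hasD3 kk (w x t) hs hc
    rw [hw x t] at hg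
    have hcomp := (hg.comp x hlin).const_mul (c₀ ^ 2)
    have hfun : (fun x'' => c₀ ^ 2 * (kk * (2 * Real.sin (w x'' t) / Real.cos (w x'' t) ^ 3
          + 2 * Real.cos (w x'' t) / Real.sin (w x'' t) ^ 3))) =
        fun x'' => c₀ ^ 2 * (((fun z => kk * (2 * Real.sin z / Real.cos z ^ 3
          + 2 * Real.cos z / Real.sin z ^ 3)) ∘ (fun x'' : ℝ => c₀ * (x'' - a₀ * t))) x'') := by
      funext x''; simp only [Function.comp, hw]
    rw [hfun]
    refine hcomp.congr_deriv ?_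
    rw [hw x t]; ring
  -- t-direction derivative of u at the point
  have hUt : HasDerivAt (fun t' => u x t')
      (-(a₀ * c₀) * (kk * (1 / Real.cos (w x t) ^ 2 - 1 / Real.sin (w x t) ^ 2))) t := by
    have hlin : HasDerivAt (fun t'' : ℝ => c₀ * (x - a₀ * t'')) (c₀ * (0 - a₀ * 1)) t :=
      ((hasDerivAt_const t x).sub ((hasDerivAt_id t).const_mul a₀)).const_mul c₀
    have hg := hasD1 a₀ kk (w x t) hs hc
    rw [hw x t] at hg
    have hcomp := hg.comp t hlin
    have hfun : (fun t' => u x t') =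
        (fun z => a₀ + kk * (Real.sin z / Real.cos z + Real.cos z / Real.sin z)) ∘
          (fun t'' : ℝ => c₀ * (x - a₀ * t'')) := by
      funext t'; simp only [Function.comp, hu', hw]
    rw [hfun]
    refine hcomp.congr_deriv ?_
    rw [hw x t]; ring
  have hUxx := hUx x hs hc
  -- v sections
  have hvfx : (fun x' => v x' t) = fun x' => a₀ * u x' t - (1 / 2) * (u x' t) ^ 2 :=
    funext fun x' => hv x' t
  have hvft : (fun t' => v x t') = fun t' => a₀ * u x t' - (1 / 2) * (u x t') ^ 2 :=
    funext fun t' => hv x t'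
  have hVx : HasDerivAt (fun x' => v x' t)
      (a₀ * (c₀ * (kk * (1 / Real.cos (w x t) ^ 2 - 1 / Real.sin (w x t) ^ 2)))
        - (1 / 2) * (2 * u x t ^ 1 * (c₀ * (kk * (1 / Real.cos (w x t) ^ 2 - 1 / Real.sin (w x t) ^ 2))))) x := by
    rw [hvfx]
    exact (hUxx.const_mul a₀).sub ((hUxx.pow 2).const_mul (1 / 2))
  have hVt : HasDerivAt (fun t' => v x t')
      (a₀ * (-(a₀ * c₀) * (kk * (1 / Real.cos (w x t) ^ 2 - 1 / Real.sin (w x t) ^ 2)))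
        - (1 / 2) * (2 * u x t ^ 1 * (-(a₀ * c₀) * (kk * (1 / Real.cos (w x t) ^ 2 - 1 / Real.sin (w x t) ^ 2))))) t := by
    rw [hvft]
    exact (hUt.const_mul a₀).sub ((hUt.pow 2).const_mul (1 / 2))
  have hUV : HasDerivAt (fun x' => u x' t * v x' t)
      ((c₀ * (kk * (1 / Real.cos (w x t) ^ 2 - 1 / Real.sin (w x t) ^ 2))) * v x t
        + u x t * (a₀ * (c₀ * (kk * (1 / Real.cos (w x t) ^ 2 - 1 / Real.sin (w x t) ^ 2)))
          - (1 / 2) * (2 * u x t ^ 1 * (c₀ * (kk * (1 / Real.cos (w x t) ^ 2 - 1 / Real.sin (w x t) ^ 2)))))) x :=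
    hUxx.mul hVx
  -- third derivative via eventual equalities
  have hwc : Continuous fun x' : ℝ => w x' t := by
    have h : (fun x' : ℝ => w x' t) = fun x' => c₀ * (x' - a₀ * t) := funext fun x' => hw x' t
    rw [h]; fun_prop
  have hev : ∀ᶠ x' in nhds x, Real.sin (w x' t) ≠ 0 ∧ Real.cos (w x' t) ≠ 0 :=
    ((Real.continuous_sin.comp hwc).continuousAt.eventually_ne hs).and
      ((Real.continuous_cos.comp hwc).continuousAt.eventually_ne hc)
  have E1 : (fun x₂ => deriv (fun x₃ => u x₃ t) x₂) =ᶠ[nhds x]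
      (fun x₂ => c₀ * (kk * (1 / Real.cos (w x₂ t) ^ 2 - 1 / Real.sin (w x₂ t) ^ 2))) :=
    hev.mono fun x' h => (hUx x' h.1 h.2).deriv
  have E3 : (fun x₂ => deriv (fun x'' => c₀ * (kk * (1 / Real.cos (w x'' t) ^ 2
        - 1 / Real.sin (w x'' t) ^ 2))) x₂) =ᶠ[nhds x]
      (fun x₂ => c₀ ^ 2 * (kk * (2 * Real.sin (w x₂ t) / Real.cos (w x₂ t) ^ 3
        + 2 * Real.cos (w x₂ t) / Real.sin (w x₂ t) ^ 3))) :=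
    hev.mono fun x' h => (hU2 x' h.1 h.2).deriv
  have E4 := E1.deriv.trans E3
  have d3 : deriv (fun x₁ : ℝ =>
        deriv (fun x₂ : ℝ => deriv (fun x₃ : ℝ => u x₃ t) x₂) x₁) x
      = c₀ ^ 3 * (kk * (2 / Real.cos (w x t) ^ 2 + 6 * Real.sin (w x t) ^ 2 / Real.cos (w x t) ^ 4
        - 2 / Real.sin (w x t) ^ 2 - 6 * Real.cos (w x t) ^ 2 / Real.sin (w x t) ^ 4)) := by
    rw [Filter.EventuallyEq.deriv_eq E4]
    exact hU3.deriv
  have hr : Real.sqrt 2 ^ 2 = 2 := Real.sq_sqrt (by norm_num)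
  have hpy := Real.sin_sq_add_cos_sq (w x t)
  constructor
  · rw [hUt.deriv, hVx.deriv, hUxx.deriv]
    ring
  · rw [hVt.deriv, hUV.deriv, d3, hu' x t, hv x t, hu' x t, hc₀, hkk]
    field_simp
    ring_nf
    linear_combination (a₀ ^ 4 * Real.sqrt 2 ^ 2 *
      (32 * Real.sin (w x t) ^ 2 * Real.cos (w x t) ^ 4 - 32 * Real.sin (w x t) ^ 4 * Real.cos (w x t) ^ 2)) * hr
end

section
/- (Variant Boussinesq, Case IV.) Let a₀ ∈ ℝ. Define w(x,t) = (√2·a₀/4)·(x - a₀·t), u(x,t) = a₀ - (√2·a₀/2)·(tan(w(x,t)) + cot(w(x,t))), and v(x,t) = a₀·u(x,t) - (1/2)·u(x,t)². Then at every (x,t) ∈ ℝ × ℝ with sin(w(x,t)) ≠ 0 and cos(w(x,t)) ≠ 0, the pair (u,v) satisfies the variant Boussinesq equations: ∂ₜu + ∂ₓv + u·∂ₓu = 0 and ∂ₜv + ∂ₓ(u·v) + ∂ₓ∂ₓ∂ₓu = 0, where partial derivatives are derivatives of the one-variable sections. -/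
open Real

noncomputable def myG (y : ℝ) : ℝ := Real.tan y + Real.cos y / Real.sin y
noncomputable def myG1 (y : ℝ) : ℝ := 1 / Real.cos y ^ 2 - 1 / Real.sin y ^ 2
noncomputable def myG2 (y : ℝ) : ℝ :=
  2 * Real.sin y / Real.cos y ^ 3 + 2 * Real.cos y / Real.sin y ^ 3
noncomputable def myG3 (y : ℝ) : ℝ :=
  2 * (Real.cos y ^ 2 + 3 * Real.sin y ^ 2) / Real.cos y ^ 4
    - 2 * (Real.sin y ^ 2 + 3 * Real.cos y ^ 2) / Real.sin y ^ 4

lemma hasDerivAt_myG (y : ℝ) (hs : Real.sin y ≠ 0) (hc : Real.cos y ≠ 0) :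
    HasDerivAt myG (myG1 y) y := by
  have h1 := Real.hasDerivAt_tan hc
  have h2 := (Real.hasDerivAt_cos y).div (Real.hasDerivAt_sin y) hs
  have h := h1.add h2
  refine h.congr_deriv ?_
  unfold myG1
  have hpy := Real.sin_sq_add_cos_sq y
  field_simp
  ring_nf
  nlinarith [hpy]

lemma hasDerivAt_myG1 (y : ℝ) (hs : Real.sin y ≠ 0) (hc : Real.cos y ≠ 0) :
    HasDerivAt myG1 (myG2 y) y := by
  have h1 := (hasDerivAt_const y (1:ℝ)).div ((Real.hasDerivAt_cos y).pow 2) (pow_ne_zero 2 hc)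
  have h2 := (hasDerivAt_const y (1:ℝ)).div ((Real.hasDerivAt_sin y).pow 2) (pow_ne_zero 2 hs)
  have h := h1.sub h2
  refine h.congr_deriv ?_
  unfold myG2
  simp only [Pi.pow_apply]
  field_simp
  ring

lemma hasDerivAt_myG2 (y : ℝ) (hs : Real.sin y ≠ 0) (hc : Real.cos y ≠ 0) :
    HasDerivAt myG2 (myG3 y) y := by
  have h1 := (((Real.hasDerivAt_sin y).div ((Real.hasDerivAt_cos y).pow 3)
    (pow_ne_zero 3 hc)).const_mul (2:ℝ))
  have h2 := (((Real.hasDerivAt_cos y).div ((Real.hasDerivAt_sin y).pow 3)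
    (pow_ne_zero 3 hs)).const_mul (2:ℝ))
  have h := h1.add h2
  have hfun : myG2 = fun x => 2 * (Real.sin x / Real.cos x ^ 3) + 2 * (Real.cos x / Real.sin x ^ 3) := by
    funext z; unfold myG2; ring
  rw [hfun]
  refine h.congr_deriv ?_
  unfold myG3
  simp only [Pi.pow_apply]
  field_simp
  ring

lemma myG_identity (y : ℝ) (hs : Real.sin y ≠ 0) (hc : Real.cos y ≠ 0) :
    myG3 y = myG1 y * (6 * (myG y) ^ 2 - 4) := by
  unfold myG myG1 myG3
  rw [Real.tan_eq_sin_div_cos]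
  have hpy := Real.sin_sq_add_cos_sq y
  field_simp
  nlinarith [hpy, sq_nonneg (Real.sin y), sq_nonneg (Real.cos y)]

/-- Variant Boussinesq, Case IV: with `w(x,t) = (√2·a₀/4)(x - a₀t)`,
`u = a₀ - (√2·a₀/2)(tan w + cot w)`, `v = a₀·u - u²/2` solve
`uₜ + vₓ + u·uₓ = 0` and `vₜ + (u·v)ₓ + uₓₓₓ = 0` wherever
`sin w ≠ 0` and `cos w ≠ 0`. -/
theorem variant_Boussinesq_solution_case_IV
    (a₀ : ℝ) (w : ℝ → ℝ → ℝ) (u v : ℝ → ℝ → ℝ)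
    (hw : ∀ x t : ℝ, w x t = (Real.sqrt 2 * a₀ / 4) * (x - a₀ * t))
    (hu : ∀ x t : ℝ, u x t = a₀ - (Real.sqrt 2 * a₀ / 2) *
        (Real.tan (w x t) + Real.cos (w x t) / Real.sin (w x t)))
    (hv : ∀ x t : ℝ, v x t = a₀ * u x t - (1 / 2) * (u x t) ^ 2) :
    ∀ x t : ℝ, Real.sin (w x t) ≠ 0 → Real.cos (w x t) ≠ 0 →
      (deriv (fun t' : ℝ => u x t') t + deriv (fun x' : ℝ => v x' t) x
        + u x t * deriv (fun x' : ℝ => u x' t) x = 0) ∧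
      (deriv (fun t' : ℝ => v x t') t + deriv (fun x' : ℝ => u x' t * v x' t) x
        + deriv (fun x₁ : ℝ =>
            deriv (fun x₂ : ℝ => deriv (fun x₃ : ℝ => u x₃ t) x₂) x₁) x = 0) := by
  intro x t hsin hcos
  set c : ℝ := Real.sqrt 2 * a₀ / 4 with hcdef
  have ha8 : a₀ ^ 2 = 8 * c ^ 2 := by
    rw [hcdef, div_pow, mul_pow, Real.sq_sqrt (by norm_num : (0:ℝ) ≤ 2)]
    ring
  have hwX : ∀ x' : ℝ, HasDerivAt (fun x'' => w x'' t) c x' := by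
    intro x'
    have hfe : (fun x'' => w x'' t) = fun x'' => c * (x'' - a₀ * t) := funext fun z => hw z t
    rw [hfe]
    simpa using ((hasDerivAt_id x').sub_const (a₀ * t)).const_mul c
  have hwT : HasDerivAt (fun t' => w x t') (-(c * a₀)) t := by
    have hfe : (fun t' => w x t') = fun t' => c * (x - a₀ * t') := funext fun z => hw x z
    rw [hfe]
    have h := (((hasDerivAt_id t).const_mul a₀).const_sub x).const_mul c
    refine h.congr_deriv ?_; ring
  have huFun : ∀ x' t' : ℝ, u x' t' = a₀ - 2 * c * myG (w x' t') := by
    intro x' t'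
    rw [hu]; unfold myG; rw [hcdef]; ring
  have hcont : Continuous fun x' => w x' t := by
    have hfe : (fun x' => w x' t) = fun x'' => c * (x'' - a₀ * t) := funext fun z => hw z t
    rw [hfe]; continuity
  have hev : ∀ x' : ℝ, Real.sin (w x' t) ≠ 0 → Real.cos (w x' t) ≠ 0 →
      ∀ᶠ z in nhds x', Real.sin (w z t) ≠ 0 ∧ Real.cos (w z t) ≠ 0 := by
    intro x' hs hc'
    have h1 := (Real.continuous_sin.comp hcont).continuousAt.eventually_ne hs
    have h2 := (Real.continuous_cos.comp hcont).continuousAt.eventually_ne hc'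
    exact h1.and h2
  have huX : ∀ x' : ℝ, Real.sin (w x' t) ≠ 0 → Real.cos (w x' t) ≠ 0 →
      HasDerivAt (fun x'' => u x'' t) (-(2 * c ^ 2) * myG1 (w x' t)) x' := by
    intro x' hs hc'
    have h := (((hasDerivAt_myG _ hs hc').comp x' (hwX x')).const_mul (2 * c)).const_sub a₀
    have hfe : (fun x'' => u x'' t) = fun x'' => a₀ - 2 * c * myG (w x'' t) :=
      funext fun z => huFun z t
    rw [hfe]
    refine h.congr_deriv ?_
    ring
  have hD1 : ∀ x' : ℝ, Real.sin (w x' t) ≠ 0 → Real.cos (w x' t) ≠ 0 →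
      deriv (fun x₃ => u x₃ t) x' = -(2 * c ^ 2) * myG1 (w x' t) :=
    fun x' hs hc' => (huX x' hs hc').deriv
  have hD2 : ∀ x' : ℝ, Real.sin (w x' t) ≠ 0 → Real.cos (w x' t) ≠ 0 →
      deriv (fun x₂ => deriv (fun x₃ => u x₃ t) x₂) x' = -(2 * c ^ 3) * myG2 (w x' t) := by
    intro x' hs hc'
    have hevEq : (fun x₂ => deriv (fun x₃ => u x₃ t) x₂)
        =ᶠ[nhds x'] fun z => -(2 * c ^ 2) * myG1 (w z t) :=
      (hev x' hs hc').mono fun z hz => hD1 z hz.1 hz.2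
    rw [hevEq.deriv_eq]
    have h := ((hasDerivAt_myG1 _ hs hc').comp x' (hwX x')).const_mul (-(2 * c ^ 2))
    have h' : HasDerivAt (fun z => -(2 * c ^ 2) * myG1 (w z t)) (-(2 * c ^ 3) * myG2 (w x' t)) x' := by
      refine h.congr_deriv ?_; ring
    exact h'.deriv
  have hD3 : deriv (fun x₁ => deriv (fun x₂ => deriv (fun x₃ => u x₃ t) x₂) x₁) x
      = -(2 * c ^ 4) * myG3 (w x t) := by
    have hevEq : (fun x₁ => deriv (fun x₂ => deriv (fun x₃ => u x₃ t) x₂) x₁)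
        =ᶠ[nhds x] fun z => -(2 * c ^ 3) * myG2 (w z t) :=
      (hev x hsin hcos).mono fun z hz => hD2 z hz.1 hz.2
    rw [hevEq.deriv_eq]
    have h := ((hasDerivAt_myG2 _ hsin hcos).comp x (hwX x)).const_mul (-(2 * c ^ 3))
    have h' : HasDerivAt (fun z => -(2 * c ^ 3) * myG2 (w z t)) (-(2 * c ^ 4) * myG3 (w x t)) x := by
      refine h.congr_deriv ?_; ring
    exact h'.deriv
  have huT : HasDerivAt (fun t' => u x t') (2 * c ^ 2 * a₀ * myG1 (w x t)) t := by
    have h := (((hasDerivAt_myG _ hsin hcos).comp t hwT).const_mul (2 * c)).const_sub a₀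
    have hfe : (fun t' => u x t') = fun t' => a₀ - 2 * c * myG (w x t') :=
      funext fun z => huFun x z
    rw [hfe]
    refine h.congr_deriv ?_
    ring
  have hvT : HasDerivAt (fun t' => v x t')
      (a₀ * (2 * c ^ 2 * a₀ * myG1 (w x t))
        - (1 / 2) * ((2 : ℕ) * u x t ^ 1 * (2 * c ^ 2 * a₀ * myG1 (w x t)))) t := by
    have hfe : (fun t' => v x t') = fun t' => a₀ * u x t' - (1 / 2) * (u x t') ^ 2 :=
      funext fun z => hv x z
    rw [hfe]
    exact (huT.const_mul a₀).sub ((huT.pow 2).const_mul (1 / 2))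
  have huXx := huX x hsin hcos
  have hvX : HasDerivAt (fun x' => v x' t)
      (a₀ * (-(2 * c ^ 2) * myG1 (w x t))
        - (1 / 2) * ((2 : ℕ) * u x t ^ 1 * (-(2 * c ^ 2) * myG1 (w x t)))) x := by
    have hfe : (fun x' => v x' t) = fun x' => a₀ * u x' t - (1 / 2) * (u x' t) ^ 2 :=
      funext fun z => hv z t
    rw [hfe]
    exact (huXx.const_mul a₀).sub ((huXx.pow 2).const_mul (1 / 2))
  have huvX : HasDerivAt (fun x' => u x' t * v x' t)
      (-(2 * c ^ 2) * myG1 (w x t) * v x t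
        + u x t * (a₀ * (-(2 * c ^ 2) * myG1 (w x t))
          - (1 / 2) * ((2 : ℕ) * u x t ^ 1 * (-(2 * c ^ 2) * myG1 (w x t))))) x :=
    huXx.mul hvX
  constructor
  · rw [huT.deriv, hvX.deriv, huXx.deriv]
    push_cast
    ring
  · rw [hvT.deriv, huvX.deriv, hD3, myG_identity _ hsin hcos, hv, huFun x t]
    push_cast
    linear_combination (-(c ^ 2) * myG1 (w x t)) * ha8
end
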